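/- Let W : X → PMF(Y) and W' : X' → PMF(Y') be channels on finite sets, and let W×W' be the product channel on X×X' given by (W×W')_{(x,x')}(y,y') = W_x(y)·W'_{x'}(y'). Then V^+_{W×W'} = V_W^+ + V_{W'}^+ and V^-_{W×W'} = V_W^- + V_{W'}^-. -/

import Mathlib

open Filter
open scoped BigOperators Classical

/-- `P` is a probability distribution on the finite type `Z`. -/
def IsDist {Z : Type} [Fintype Z] (P : Z → ℝ) : Prop :=
  (∀ z, 0 ≤ P z) ∧ ∑ z, P z = 1

/-- `W` is a channel: every row is a probability distribution. -/
def IsChannel {A B : Type} [Fintype B] (W : A → B → ℝ) : Prop := ∀ x, IsDist (W x)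

/-- Output distribution `W_P`. -/
noncomputable def outDist {A B : Type} [Fintype A] (P : A → ℝ) (W : A → B → ℝ) (y : B) : ℝ :=
  ∑ x, P x * W x y

/-- Relative entropy `D(W_x‖W_P)` (natural logarithm). -/
noncomputable def relEnt {X Y : Type} [Fintype X] [Fintype Y]
    (W : X → Y → ℝ) (P : X → ℝ) (x : X) : ℝ :=
  ∑ y, W x y * Real.log (W x y / outDist P W y)

/-- Mutual information `I(P,W)`. -/
noncomputable def mutInfo {X Y : Type} [Fintype X] [Fintype Y]
    (P : X → ℝ) (W : X → Y → ℝ) : ℝ :=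
  ∑ x, P x * relEnt W P x

/-- Channel dispersion `V_{P,W}`. -/
noncomputable def varInfo {X Y : Type} [Fintype X] [Fintype Y]
    (P : X → ℝ) (W : X → Y → ℝ) : ℝ :=
  ∑ x, P x * ∑ y, W x y * (Real.log (W x y / outDist P W y) - relEnt W P x) ^ 2


/-- Capacity `C_W = max_P I(P,W)`. -/
noncomputable def Ccap {X Y : Type} [Fintype X] [Fintype Y] (W : X → Y → ℝ) : ℝ :=
  sSup { r | ∃ P : X → ℝ, IsDist P ∧ r = mutInfo P W }

/-- `V_W^+ = max_{P : I(P,W) = C_W} V_{P,W}`. -/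
noncomputable def Vplus {X Y : Type} [Fintype X] [Fintype Y] (W : X → Y → ℝ) : ℝ :=
  sSup { v | ∃ P : X → ℝ, IsDist P ∧ mutInfo P W = Ccap W ∧ v = varInfo P W }

/-- `V_W^- = min_{P : I(P,W) = C_W} V_{P,W}`. -/
noncomputable def Vminus {X Y : Type} [Fintype X] [Fintype Y] (W : X → Y → ℝ) : ℝ :=
  sInf { v | ∃ P : X → ℝ, IsDist P ∧ mutInfo P W = Ccap W ∧ v = varInfo P W }

/-- Product of two channels. -/
def prodCh {X Y X' Y' : Type} (W : X → Y → ℝ) (W' : X' → Y' → ℝ) :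
    X × X' → Y × Y' → ℝ :=
  fun p q => W p.1 q.1 * W' p.2 q.2

section VAuxiliary
open Real

variable {Z : Type} [Fintype Z]

lemma isDist_le_one {P : Z → ℝ} (h : IsDist P) (z : Z) : P z ≤ 1 := by
  have h1 := Finset.single_le_sum (f := P) (fun i _ => h.1 i) (Finset.mem_univ z)
  simpa [h.2] using h1

lemma sq_le_exp' {s : ℝ} (hs : 0 ≤ s) : s ^ 2 ≤ Real.exp s := by
  have h1 : s / 2 ≤ Real.exp (s / 2 - 1) := by
    have := Real.add_one_le_exp (s / 2 - 1); linarith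
  have h2 : Real.exp (s / 2 - 1) ≤ Real.exp (s / 2) / 2 := by
    rw [Real.exp_sub]
    have h3 : (2 : ℝ) ≤ Real.exp 1 := by
      have := Real.exp_one_gt_d9; linarith
    have h4 : (0:ℝ) < Real.exp (s/2) := Real.exp_pos _
    rw [div_le_div_iff₀ (Real.exp_pos 1) two_pos]
    nlinarith [Real.exp_pos 1]
  have h5 : s ≤ Real.exp (s / 2) := by
    have := h1.trans h2
    nlinarith [Real.exp_pos (s/2)]
  have h6 : s ^ 2 ≤ Real.exp (s / 2) ^ 2 := by
    nlinarith [Real.exp_pos (s/2)]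
  calc s ^ 2 ≤ Real.exp (s / 2) ^ 2 := h6
    _ = Real.exp s := by rw [sq, ← Real.exp_add]; norm_num
      
lemma mul_log_sq_le_one {c : ℝ} (h0 : 0 < c) (h1 : c ≤ 1) : c * Real.log c ^ 2 ≤ 1 := by
  set s := -Real.log c with hs
  have hs0 : 0 ≤ s := by
    have := Real.log_nonpos (le_of_lt h0) h1
    simp only [hs]; linarith
  have hc : c = Real.exp (-s) := by rw [hs, neg_neg, Real.exp_log h0]
  have h2 : s ^ 2 ≤ Real.exp s := sq_le_exp' hs0
  have h3 : Real.log c ^ 2 = s ^ 2 := by rw [hs]; ring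
  rw [h3, hc]
  have h4 : Real.exp (-s) * s ^ 2 ≤ Real.exp (-s) * Real.exp s :=
    mul_le_mul_of_nonneg_left h2 (Real.exp_pos _).le
  calc Real.exp (-s) * s ^ 2 ≤ Real.exp (-s) * Real.exp s := h4
    _ = 1 := by rw [← Real.exp_add]; simp

/-- Gibbs' inequality with Lean's junk-value conventions, assuming absolute continuity. -/
lemma gibbs_nonneg {q r : Z → ℝ} (hq : IsDist q) (hr : IsDist r)
    (hac : ∀ z, r z = 0 → q z = 0) : 0 ≤ ∑ z, q z * Real.log (q z / r z) := by
  have key : ∀ z, q z - r z ≤ q z * Real.log (q z / r z) := by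
    intro z
    rcases eq_or_lt_of_le (hq.1 z) with h | h
    · simp [← h]
      exact hr.1 z
    · have hrz : 0 < r z := by
        rcases eq_or_lt_of_le (hr.1 z) with h' | h'
        · exact absurd (hac z h'.symm) (by positivity)
        · exact h'
      have hlog : Real.log (r z / q z) ≤ r z / q z - 1 :=
        Real.log_le_sub_one_of_pos (div_pos hrz h)
      have hlog2 : Real.log (q z / r z) = - Real.log (r z / q z) := by
        rw [← Real.log_inv, inv_div]
      rw [hlog2]
      have := mul_le_mul_of_nonneg_left hlog (le_of_lt h)
      have h7 : q z * (r z / q z - 1) = r z - q z := by field_simp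
      nlinarith
  calc (0:ℝ) = ∑ z, (q z - r z) := by rw [Finset.sum_sub_distrib, hq.2, hr.2]; ring
    _ ≤ ∑ z, q z * Real.log (q z / r z) := Finset.sum_le_sum (fun z _ => key z)

lemma gibbs_eq {q r : Z → ℝ} (hq : IsDist q) (hr : IsDist r)
    (hac : ∀ z, r z = 0 → q z = 0) (h0 : ∑ z, q z * Real.log (q z / r z) = 0) : q = r := by
  have key : ∀ z, q z - r z ≤ q z * Real.log (q z / r z) := by
    intro z
    rcases eq_or_lt_of_le (hq.1 z) with h | h
    · simp [← h]; exact hr.1 z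
    · have hrz : 0 < r z := by
        rcases eq_or_lt_of_le (hr.1 z) with h' | h'
        · exact absurd (hac z h'.symm) (by positivity)
        · exact h'
      have hlog : Real.log (r z / q z) ≤ r z / q z - 1 :=
        Real.log_le_sub_one_of_pos (div_pos hrz h)
      have hlog2 : Real.log (q z / r z) = - Real.log (r z / q z) := by
        rw [← Real.log_inv, inv_div]
      rw [hlog2]
      have := mul_le_mul_of_nonneg_left hlog (le_of_lt h)
      have h7 : q z * (r z / q z - 1) = r z - q z := by field_simp
      nlinarith
  -- each g z := q z * log (q z / r z) - (q z - r z) is nonneg and sums to 0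
  have hsum : ∑ z, (q z * Real.log (q z / r z) - (q z - r z)) = 0 := by
    rw [Finset.sum_sub_distrib, h0, Finset.sum_sub_distrib, hq.2, hr.2]; ring
  have hzero : ∀ z ∈ Finset.univ, q z * Real.log (q z / r z) - (q z - r z) = 0 := by
    rw [← Finset.sum_eq_zero_iff_of_nonneg (fun z _ => by linarith [key z])]
    exact hsum
  funext z
  have hz := hzero z (Finset.mem_univ z)
  rcases eq_or_lt_of_le (hq.1 z) with h | h
  · rw [← h] at hz ⊢
    simp at hz
    linarith
  · have hrz : 0 < r z := by
      rcases eq_or_lt_of_le (hr.1 z) with h' | h'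
      · exact absurd (hac z h'.symm) (by positivity)
      · exact h'
    by_contra hne
    have hne' : r z / q z ≠ 1 := by
      intro hcontra
      apply hne
      field_simp at hcontra
      linarith
    have hlog : Real.log (r z / q z) < r z / q z - 1 :=
      Real.log_lt_sub_one_of_pos (div_pos hrz h) hne'
    have hlog2 : Real.log (q z / r z) = - Real.log (r z / q z) := by
      rw [← Real.log_inv, inv_div]
    rw [hlog2] at hz
    have := mul_lt_mul_of_pos_left hlog h
    have h7 : q z * (r z / q z - 1) = r z - q z := by field_simp
    nlinarith

end VAuxiliary

section VAux2
open Real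

variable {X Y : Type} [Fintype X] [Fintype Y]

lemma outDist_nonneg {P : X → ℝ} {W : X → Y → ℝ} (hP : IsDist P) (hW : IsChannel W) (y : Y) :
    0 ≤ outDist P W y :=
  Finset.sum_nonneg fun x _ => mul_nonneg (hP.1 x) ((hW x).1 y)

lemma le_outDist {P : X → ℝ} {W : X → Y → ℝ} (hP : IsDist P) (hW : IsChannel W) (x : X) (y : Y) :
    P x * W x y ≤ outDist P W y :=
  Finset.single_le_sum (f := fun x => P x * W x y)
    (fun i _ => mul_nonneg (hP.1 i) ((hW i).1 y)) (Finset.mem_univ x)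

lemma outDist_isDist {P : X → ℝ} {W : X → Y → ℝ} (hP : IsDist P) (hW : IsChannel W) :
    IsDist (outDist P W) := by
  constructor
  · exact outDist_nonneg hP hW
  · unfold outDist
    rw [Finset.sum_comm]
    calc ∑ x, ∑ y, P x * W x y = ∑ x, P x * ∑ y, W x y := by
          simp [Finset.mul_sum]
      _ = 1 := by
          simp only [fun x => (hW x).2, mul_one]
          exact hP.2

lemma outDist_le_one {P : X → ℝ} {W : X → Y → ℝ} (hP : IsDist P) (hW : IsChannel W) (y : Y) :
    outDist P W y ≤ 1 := isDist_le_one (outDist_isDist hP hW) y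

lemma outDist_eq_zero {P : X → ℝ} {W : X → Y → ℝ} (hP : IsDist P) (hW : IsChannel W) {y : Y}
    (h : outDist P W y = 0) (x : X) : P x * W x y = 0 := by
  have := (Finset.sum_eq_zero_iff_of_nonneg
    (fun i (_ : i ∈ Finset.univ) => mul_nonneg (hP.1 i) ((hW i).1 y))).1 h
  exact this x (Finset.mem_univ x)

lemma mutInfo_eq_double {P : X → ℝ} {W : X → Y → ℝ} :
    mutInfo P W = ∑ x, ∑ y, P x * W x y * Real.log (W x y / outDist P W y) := by
  unfold mutInfo relEnt
  congr 1
  funext x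
  rw [Finset.mul_sum]
  congr 1
  funext y
  ring

/-- Splitting `mutInfo` into a linear part and the output entropy. Valid on the simplex. -/
lemma mutInfo_split {P : X → ℝ} {W : X → Y → ℝ} (hP : IsDist P) (hW : IsChannel W) :
    mutInfo P W = (∑ x, ∑ y, P x * W x y * Real.log (W x y))
      - ∑ y, outDist P W y * Real.log (outDist P W y) := by
  rw [mutInfo_eq_double, Finset.sum_comm, Finset.sum_comm (f := fun x y => P x * W x y * Real.log (W x y)),
    ← Finset.sum_sub_distrib]
  congr 1
  funext y
  rcases eq_or_lt_of_le (outDist_nonneg hP hW y) with hQ | hQ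
  · have hz := outDist_eq_zero hP hW hQ.symm
    have e1 : ∑ x, P x * W x y * Real.log (W x y / outDist P W y) = 0 :=
      Finset.sum_eq_zero (fun x _ => by rw [hz x, zero_mul])
    have e2 : ∑ x, P x * W x y * Real.log (W x y) = 0 :=
      Finset.sum_eq_zero (fun x _ => by rw [hz x, zero_mul])
    rw [e1, e2, ← hQ]
    simp
  · have hQ' : outDist P W y = ∑ x, P x * W x y := rfl
    rw [show outDist P W y * Real.log (outDist P W y) = ∑ x, P x * W x y * Real.log (outDist P W y) by
      rw [← Finset.sum_mul, ← hQ'], ← Finset.sum_sub_distrib]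
    apply Finset.sum_congr rfl
    intro x _
    rcases eq_or_lt_of_le (mul_nonneg (hP.1 x) ((hW x).1 y)) with hc | hc
    · rw [← hc]; ring
    · have hw : 0 < W x y := by
        rcases eq_or_lt_of_le ((hW x).1 y) with h | h
        · exfalso; rw [← h] at hc; simp at hc
        · exact h
      rw [Real.log_div (ne_of_gt hw) (ne_of_gt hQ)]
      ring

lemma isDist_iff_mem_stdSimplex (P : X → ℝ) : IsDist P ↔ P ∈ stdSimplex ℝ X := Iff.rfl

lemma exists_isDist [Nonempty X] : ∃ P : X → ℝ, IsDist P := by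
  obtain ⟨x0⟩ := ‹Nonempty X›
  refine ⟨fun x => if x = x0 then 1 else 0, fun x => by positivity, ?_⟩
  simp

/-- Existence of a capacity-achieving distribution. -/
lemma exists_max [Nonempty X] (W : X → Y → ℝ) (hW : IsChannel W) :
    ∃ P0 : X → ℝ, IsDist P0 ∧ ∀ P, IsDist P → mutInfo P W ≤ mutInfo P0 W := by
  set g : (X → ℝ) → ℝ := fun P => (∑ x, ∑ y, P x * W x y * Real.log (W x y))
      - ∑ y, (outDist P W y) * Real.log (outDist P W y) with hg
  have hcont : Continuous g := by
    apply Continuous.sub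
    · apply continuous_finset_sum
      intro x _
      apply continuous_finset_sum
      intro y _
      exact ((continuous_apply x).mul continuous_const).mul continuous_const
    · apply continuous_finset_sum
      intro y _
      have h1 : Continuous fun P : X → ℝ => outDist P W y := by
        apply continuous_finset_sum
        intro x _
        exact (continuous_apply x).mul continuous_const
      exact (Real.continuous_mul_log).comp h1
  obtain ⟨P1, hP1⟩ := exists_isDist (X := X)
  obtain ⟨P0, hP0mem, hP0max⟩ := isCompact_stdSimplex ℝ X |>.exists_isMaxOn
    ⟨P1, (isDist_iff_mem_stdSimplex P1).1 hP1⟩ hcont.continuousOn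
  refine ⟨P0, (isDist_iff_mem_stdSimplex P0).2 hP0mem, fun P hP => ?_⟩
  have h1 := hP0max ((isDist_iff_mem_stdSimplex P).1 hP)
  rw [mutInfo_split hP hW, mutInfo_split ((isDist_iff_mem_stdSimplex P0).2 hP0mem) hW]
  exact h1

lemma Ccap_spec [Nonempty X] (W : X → Y → ℝ) (hW : IsChannel W) :
    ∃ P0 : X → ℝ, IsDist P0 ∧ mutInfo P0 W = Ccap W ∧ ∀ P, IsDist P → mutInfo P W ≤ Ccap W := by
  obtain ⟨P0, hP0, hmax⟩ := exists_max W hW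
  have hmem : mutInfo P0 W ∈ { r | ∃ P : X → ℝ, IsDist P ∧ r = mutInfo P W } := ⟨P0, hP0, rfl⟩
  have hbdd : BddAbove { r | ∃ P : X → ℝ, IsDist P ∧ r = mutInfo P W } := by
    refine ⟨mutInfo P0 W, fun r hr => ?_⟩
    obtain ⟨P, hP, rfl⟩ := hr
    exact hmax P hP
  have hsup : Ccap W = mutInfo P0 W := by
    apply le_antisymm
    · exact csSup_le ⟨_, hmem⟩ (fun r hr => by obtain ⟨P, hP, rfl⟩ := hr; exact hmax P hP)
    · exact le_csSup hbdd hmem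
  exact ⟨P0, hP0, hsup.symm, fun P hP => by rw [hsup]; exact hmax P hP⟩

end VAux2

noncomputable def marg1 {X X' : Type} [Fintype X'] (P : X × X' → ℝ) (x : X) : ℝ := ∑ x', P (x, x')
noncomputable def marg2 {X X' : Type} [Fintype X] (P : X × X' → ℝ) (x' : X') : ℝ := ∑ x, P (x, x')

section VAux3
open Real

variable {X Y X' Y' : Type} [Fintype X] [Fintype Y] [Fintype X'] [Fintype Y']
variable {W : X → Y → ℝ} {W' : X' → Y' → ℝ}

lemma prodCh_isChannel (hW : IsChannel W) (hW' : IsChannel W') : IsChannel (prodCh W W') := by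
  intro t
  constructor
  · intro u; exact mul_nonneg ((hW t.1).1 u.1) ((hW' t.2).1 u.2)
  · calc ∑ u : Y × Y', W t.1 u.1 * W' t.2 u.2
        = (∑ y, W t.1 y) * ∑ y', W' t.2 y' := by
          rw [Fintype.sum_prod_type, Finset.sum_mul]
          exact Finset.sum_congr rfl fun y _ => by rw [Finset.mul_sum]
      _ = 1 := by rw [(hW t.1).2, (hW' t.2).2, one_mul]

lemma marg1_isDist {P : X × X' → ℝ} (hP : IsDist P) : IsDist (marg1 P) := by
  constructor
  · intro x; exact Finset.sum_nonneg fun x' _ => hP.1 _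
  · rw [← hP.2, Fintype.sum_prod_type]; rfl

lemma marg2_isDist {P : X × X' → ℝ} (hP : IsDist P) : IsDist (marg2 P) := by
  constructor
  · intro x'; exact Finset.sum_nonneg fun x _ => hP.1 _
  · rw [← hP.2, Fintype.sum_prod_type_right]; rfl

lemma le_marg1 {P : X × X' → ℝ} (hP : IsDist P) (t : X × X') : P t ≤ marg1 P t.1 :=
  Finset.single_le_sum (f := fun x' => P (t.1, x')) (fun i _ => hP.1 _) (Finset.mem_univ t.2)

lemma le_marg2 {P : X × X' → ℝ} (hP : IsDist P) (t : X × X') : P t ≤ marg2 P t.2 :=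
  Finset.single_le_sum (f := fun x => P (x, t.2)) (fun i _ => hP.1 _) (Finset.mem_univ t.1)

/-- All the positivity facts at a point where `P t * prodCh W W' t u > 0`. -/
lemma prod_pos_facts {P : X × X' → ℝ} (hP : IsDist P) (hW : IsChannel W) (hW' : IsChannel W')
    {t : X × X'} {u : Y × Y'} (hc : 0 < P t * prodCh W W' t u) :
    0 < P t ∧ 0 < W t.1 u.1 ∧ 0 < W' t.2 u.2 ∧ 0 < outDist P (prodCh W W') u ∧
      0 < outDist (marg1 P) W u.1 ∧ 0 < outDist (marg2 P) W' u.2 := by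
  have hPt : 0 < P t := by
    rcases eq_or_lt_of_le (hP.1 t) with h | h
    · exfalso; rw [← h, zero_mul] at hc; exact lt_irrefl _ hc
    · exact h
  have hWp : 0 < prodCh W W' t u := by
    rcases eq_or_lt_of_le ((prodCh_isChannel hW hW' t).1 u) with h | h
    · exfalso; rw [← h, mul_zero] at hc; exact lt_irrefl _ hc
    · exact h
  have hW1 : 0 < W t.1 u.1 := by
    rcases eq_or_lt_of_le ((hW t.1).1 u.1) with h | h
    · exfalso; have : prodCh W W' t u = 0 := by unfold prodCh; rw [← h, zero_mul]
      rw [this] at hWp; exact lt_irrefl _ hWp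
    · exact h
  have hW2 : 0 < W' t.2 u.2 := by
    rcases eq_or_lt_of_le ((hW' t.2).1 u.2) with h | h
    · exfalso; have : prodCh W W' t u = 0 := by unfold prodCh; rw [← h, mul_zero]
      rw [this] at hWp; exact lt_irrefl _ hWp
    · exact h
  have hQ : 0 < outDist P (prodCh W W') u :=
    lt_of_lt_of_le hc (le_outDist hP (prodCh_isChannel hW hW') t u)
  have hQ1 : 0 < outDist (marg1 P) W u.1 := by
    have h1 : P t * W t.1 u.1 ≤ marg1 P t.1 * W t.1 u.1 :=
      mul_le_mul_of_nonneg_right (le_marg1 hP t) ((hW t.1).1 u.1)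
    have h2 := le_outDist (marg1_isDist hP) hW t.1 u.1
    nlinarith
  have hQ2 : 0 < outDist (marg2 P) W' u.2 := by
    have h1 : P t * W' t.2 u.2 ≤ marg2 P t.2 * W' t.2 u.2 :=
      mul_le_mul_of_nonneg_right (le_marg2 hP t) ((hW' t.2).1 u.2)
    have h2 := le_outDist (marg2_isDist hP) hW' t.2 u.2
    nlinarith
  exact ⟨hPt, hW1, hW2, hQ, hQ1, hQ2⟩

/-- Rearrangement: summing out the second coordinate pair. -/
lemma sum_prod_factor1 {P : X × X' → ℝ} (hW' : IsChannel W') (f : X → Y → ℝ) :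
    ∑ t : X × X', ∑ u : Y × Y', P t * prodCh W W' t u * f t.1 u.1
      = ∑ x, ∑ y, marg1 P x * W x y * f x y := by
  calc ∑ t : X × X', ∑ u : Y × Y', P t * prodCh W W' t u * f t.1 u.1
      = ∑ x, ∑ x', ∑ y, ∑ y', P (x, x') * (W x y * W' x' y') * f x y := by
        simp only [Fintype.sum_prod_type]; rfl
    _ = ∑ x, ∑ x', ∑ y, P (x, x') * W x y * f x y * ∑ y', W' x' y' := by
        refine Finset.sum_congr rfl fun x _ => Finset.sum_congr rfl fun x' _ =>
          Finset.sum_congr rfl fun y _ => ?_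
        rw [Finset.mul_sum]
        exact Finset.sum_congr rfl fun y' _ => by ring
    _ = ∑ x, ∑ x', ∑ y, P (x, x') * W x y * f x y := by
        refine Finset.sum_congr rfl fun x _ => Finset.sum_congr rfl fun x' _ =>
          Finset.sum_congr rfl fun y _ => ?_
        rw [(hW' x').2, mul_one]
    _ = ∑ x, ∑ y, (∑ x', P (x, x')) * (W x y * f x y) := by
        refine Finset.sum_congr rfl fun x _ => ?_
        rw [Finset.sum_comm]
        refine Finset.sum_congr rfl fun y _ => ?_
        rw [Finset.sum_mul]
        exact Finset.sum_congr rfl fun x' _ => by ring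
    _ = ∑ x, ∑ y, marg1 P x * W x y * f x y := by
        refine Finset.sum_congr rfl fun x _ => Finset.sum_congr rfl fun y _ => ?_
        unfold marg1; ring

/-- Rearrangement: summing out the first coordinate pair. -/
lemma sum_prod_factor2 {P : X × X' → ℝ} (hW : IsChannel W) (f : X' → Y' → ℝ) :
    ∑ t : X × X', ∑ u : Y × Y', P t * prodCh W W' t u * f t.2 u.2
      = ∑ x', ∑ y', marg2 P x' * W' x' y' * f x' y' := by
  calc ∑ t : X × X', ∑ u : Y × Y', P t * prodCh W W' t u * f t.2 u.2
      = ∑ x, ∑ x', ∑ y', ∑ y, P (x, x') * (W x y * W' x' y') * f x' y' := by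
        simp only [Fintype.sum_prod_type]
        exact Finset.sum_congr rfl fun x _ => Finset.sum_congr rfl fun x' _ => Finset.sum_comm
    _ = ∑ x, ∑ x', ∑ y', P (x, x') * W' x' y' * f x' y' * ∑ y, W x y := by
        refine Finset.sum_congr rfl fun x _ => Finset.sum_congr rfl fun x' _ =>
          Finset.sum_congr rfl fun y' _ => ?_
        rw [Finset.mul_sum]
        exact Finset.sum_congr rfl fun y _ => by ring
    _ = ∑ x, ∑ x', ∑ y', P (x, x') * W' x' y' * f x' y' := by
        refine Finset.sum_congr rfl fun x _ => Finset.sum_congr rfl fun x' _ =>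
          Finset.sum_congr rfl fun y' _ => ?_
        rw [(hW x).2, mul_one]
    _ = ∑ x', ∑ y', (∑ x, P (x, x')) * (W' x' y' * f x' y') := by
        rw [Finset.sum_comm]
        refine Finset.sum_congr rfl fun x' _ => ?_
        rw [Finset.sum_comm]
        refine Finset.sum_congr rfl fun y' _ => ?_
        rw [Finset.sum_mul]
        exact Finset.sum_congr rfl fun x _ => by ring
    _ = ∑ x', ∑ y', marg2 P x' * W' x' y' * f x' y' := by
        refine Finset.sum_congr rfl fun x' _ => Finset.sum_congr rfl fun y' _ => ?_
        unfold marg2; ring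

end VAux3

section VAux4
open Real

variable {X Y X' Y' : Type} [Fintype X] [Fintype Y] [Fintype X'] [Fintype Y']
variable {W : X → Y → ℝ} {W' : X' → Y' → ℝ}

/-- The divergence between the joint output distribution and the product of marginal outputs. -/
noncomputable def prodDiv (P : X × X' → ℝ) (W : X → Y → ℝ) (W' : X' → Y' → ℝ) : ℝ :=
  ∑ u : Y × Y', outDist P (prodCh W W') u *
    Real.log (outDist P (prodCh W W') u / (outDist (marg1 P) W u.1 * outDist (marg2 P) W' u.2))

lemma mutInfo_prod_eq {P : X × X' → ℝ} (hP : IsDist P) (hW : IsChannel W) (hW' : IsChannel W') :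
    mutInfo P (prodCh W W')
      = mutInfo (marg1 P) W + mutInfo (marg2 P) W' - prodDiv P W W' := by
  have hWp := prodCh_isChannel hW hW'
  set Q := outDist P (prodCh W W') with hQdef
  set Q1 := outDist (marg1 P) W with hQ1def
  set Q2 := outDist (marg2 P) W' with hQ2def
  -- B : the "product reference" double sum
  set B := ∑ t : X × X', ∑ u : Y × Y',
      P t * prodCh W W' t u * Real.log (prodCh W W' t u / (Q1 u.1 * Q2 u.2)) with hBdef
  have claim2 : B = mutInfo (marg1 P) W + mutInfo (marg2 P) W' := by
    have hsplit : B = (∑ t : X × X', ∑ u : Y × Y',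
        P t * prodCh W W' t u * Real.log (W t.1 u.1 / Q1 u.1))
        + ∑ t : X × X', ∑ u : Y × Y',
        P t * prodCh W W' t u * Real.log (W' t.2 u.2 / Q2 u.2) := by
      rw [hBdef, ← Finset.sum_add_distrib]
      refine Finset.sum_congr rfl fun t _ => ?_
      rw [← Finset.sum_add_distrib]
      refine Finset.sum_congr rfl fun u _ => ?_
      rcases eq_or_lt_of_le (mul_nonneg (hP.1 t) ((hWp t).1 u)) with hc | hc
      · rw [← hc]; ring
      · obtain ⟨hPt, hW1, hW2, hQu, hQ1u, hQ2u⟩ := prod_pos_facts hP hW hW' hc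
        have : Real.log (prodCh W W' t u / (Q1 u.1 * Q2 u.2))
            = Real.log (W t.1 u.1 / Q1 u.1) + Real.log (W' t.2 u.2 / Q2 u.2) := by
          show Real.log ((W t.1 u.1 * W' t.2 u.2) / (Q1 u.1 * Q2 u.2)) = _
          rw [Real.log_div (by positivity) (by positivity), Real.log_mul (ne_of_gt hW1) (ne_of_gt hW2),
            Real.log_mul (ne_of_gt hQ1u) (ne_of_gt hQ2u),
            Real.log_div (ne_of_gt hW1) (ne_of_gt hQ1u), Real.log_div (ne_of_gt hW2) (ne_of_gt hQ2u)]
          ring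
        rw [this]; ring
    rw [hsplit, sum_prod_factor1 hW' (fun x y => Real.log (W x y / Q1 y)),
      sum_prod_factor2 hW (fun x' y' => Real.log (W' x' y' / Q2 y')),
      mutInfo_eq_double, mutInfo_eq_double]
  have claim1 : B - mutInfo P (prodCh W W') = prodDiv P W W' := by
    rw [mutInfo_eq_double, hBdef]
    simp only [← Finset.sum_sub_distrib]
    rw [Finset.sum_comm]
    unfold prodDiv
    refine Finset.sum_congr rfl fun u _ => ?_
    have hQu : Q u = ∑ t, P t * prodCh W W' t u := rfl
    rcases eq_or_lt_of_le (outDist_nonneg hP hWp u) with hQ0 | hQ0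
    · have hz := outDist_eq_zero hP hWp (hQ0.symm)
      rw [Finset.sum_congr rfl (fun t _ => by rw [hz t]; ring : ∀ t ∈ Finset.univ, _ = (0:ℝ)),
        Finset.sum_const, smul_zero, ← hQ0, zero_mul]
    · rw [show (Q u : ℝ) * Real.log (Q u / (Q1 u.1 * Q2 u.2))
          = ∑ t, P t * prodCh W W' t u * Real.log (Q u / (Q1 u.1 * Q2 u.2)) by
        rw [← Finset.sum_mul, ← hQu]]
      refine Finset.sum_congr rfl fun t _ => ?_
      rcases eq_or_lt_of_le (mul_nonneg (hP.1 t) ((hWp t).1 u)) with hc | hc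
      · rw [← hc]; ring
      · obtain ⟨hPt, hW1, hW2, hQu', hQ1u, hQ2u⟩ := prod_pos_facts hP hW hW' hc
        have hWpu : 0 < prodCh W W' t u := by
          show 0 < W t.1 u.1 * W' t.2 u.2; positivity
        rw [Real.log_div (ne_of_gt hWpu) (by positivity),
          Real.log_div (ne_of_gt hWpu) (ne_of_gt hQu'),
          Real.log_div (ne_of_gt hQu') (by positivity)]
        ring
  linarith

end VAux4

section VAux5
open Real

variable {X Y X' Y' : Type} [Fintype X] [Fintype Y] [Fintype X'] [Fintype Y']
variable {W : X → Y → ℝ} {W' : X' → Y' → ℝ}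

lemma prodOut_isDist {P : X × X' → ℝ} (hP : IsDist P) (hW : IsChannel W) (hW' : IsChannel W') :
    IsDist (fun u : Y × Y' => outDist (marg1 P) W u.1 * outDist (marg2 P) W' u.2) := by
  constructor
  · intro u
    exact mul_nonneg (outDist_nonneg (marg1_isDist hP) hW u.1)
      (outDist_nonneg (marg2_isDist hP) hW' u.2)
  · rw [Fintype.sum_prod_type]
    calc ∑ y, ∑ y', outDist (marg1 P) W y * outDist (marg2 P) W' y'
        = (∑ y, outDist (marg1 P) W y) * ∑ y', outDist (marg2 P) W' y' := by
          rw [Finset.sum_mul]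
          exact Finset.sum_congr rfl fun y _ => by rw [Finset.mul_sum]
      _ = 1 := by
          rw [(outDist_isDist (marg1_isDist hP) hW).2, (outDist_isDist (marg2_isDist hP) hW').2,
            one_mul]

lemma outDist_prod_le1 {P : X × X' → ℝ} (hP : IsDist P) (hW : IsChannel W) (hW' : IsChannel W')
    (u : Y × Y') : outDist P (prodCh W W') u ≤ outDist (marg1 P) W u.1 := by
  have h1 : outDist (marg1 P) W u.1 = ∑ t : X × X', P t * W t.1 u.1 := by
    unfold outDist marg1
    rw [Fintype.sum_prod_type]
    exact Finset.sum_congr rfl fun x _ => by rw [Finset.sum_mul]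
  rw [h1]
  apply Finset.sum_le_sum
  intro t _
  have := isDist_le_one (hW' t.2) u.2
  have h2 := (hW' t.2).1 u.2
  have h3 := (hW t.1).1 u.1
  have h4 := hP.1 t
  show P t * (W t.1 u.1 * W' t.2 u.2) ≤ P t * W t.1 u.1
  nlinarith [mul_nonneg (mul_nonneg h4 h3) (sub_nonneg.2 this)]

lemma outDist_prod_le2 {P : X × X' → ℝ} (hP : IsDist P) (hW : IsChannel W) (hW' : IsChannel W')
    (u : Y × Y') : outDist P (prodCh W W') u ≤ outDist (marg2 P) W' u.2 := by
  have h1 : outDist (marg2 P) W' u.2 = ∑ t : X × X', P t * W' t.2 u.2 := by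
    unfold outDist marg2
    rw [Fintype.sum_prod_type_right]
    exact Finset.sum_congr rfl fun x' _ => by rw [Finset.sum_mul]
  rw [h1]
  apply Finset.sum_le_sum
  intro t _
  have := isDist_le_one (hW t.1) u.1
  have h2 := (hW' t.2).1 u.2
  have h3 := (hW t.1).1 u.1
  have h4 := hP.1 t
  show P t * (W t.1 u.1 * W' t.2 u.2) ≤ P t * W' t.2 u.2
  nlinarith [mul_nonneg (mul_nonneg h4 h2) (sub_nonneg.2 this)]

lemma prod_ac {P : X × X' → ℝ} (hP : IsDist P) (hW : IsChannel W) (hW' : IsChannel W')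
    (u : Y × Y') (h : outDist (marg1 P) W u.1 * outDist (marg2 P) W' u.2 = 0) :
    outDist P (prodCh W W') u = 0 := by
  rcases mul_eq_zero.1 h with h | h
  · have h1 := outDist_prod_le1 hP hW hW' u
    have h2 := outDist_nonneg hP (prodCh_isChannel hW hW') u
    rw [h] at h1; linarith
  · have h1 := outDist_prod_le2 hP hW hW' u
    have h2 := outDist_nonneg hP (prodCh_isChannel hW hW') u
    rw [h] at h1; linarith

lemma prodDiv_nonneg {P : X × X' → ℝ} (hP : IsDist P) (hW : IsChannel W) (hW' : IsChannel W') :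
    0 ≤ prodDiv P W W' :=
  gibbs_nonneg (outDist_isDist hP (prodCh_isChannel hW hW')) (prodOut_isDist hP hW hW')
    (prod_ac hP hW hW')

lemma prodDiv_eq_zero {P : X × X' → ℝ} (hP : IsDist P) (hW : IsChannel W) (hW' : IsChannel W')
    (h : prodDiv P W W' = 0) :
    ∀ u : Y × Y', outDist P (prodCh W W') u
      = outDist (marg1 P) W u.1 * outDist (marg2 P) W' u.2 := by
  have := gibbs_eq (outDist_isDist hP (prodCh_isChannel hW hW')) (prodOut_isDist hP hW hW')
    (prod_ac hP hW hW') h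
  intro u
  exact congrFun this u

/-- Product input distribution. -/
lemma prodDist_isDist {p1 : X → ℝ} {p2 : X' → ℝ} (h1 : IsDist p1) (h2 : IsDist p2) :
    IsDist (fun t : X × X' => p1 t.1 * p2 t.2) := by
  constructor
  · intro t; exact mul_nonneg (h1.1 t.1) (h2.1 t.2)
  · rw [Fintype.sum_prod_type]
    calc ∑ x, ∑ x', p1 x * p2 x' = (∑ x, p1 x) * ∑ x', p2 x' := by
          rw [Finset.sum_mul]
          exact Finset.sum_congr rfl fun x _ => by rw [Finset.mul_sum]
      _ = 1 := by rw [h1.2, h2.2, one_mul]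

lemma marg1_prodDist {p1 : X → ℝ} {p2 : X' → ℝ} (h2 : IsDist p2) :
    marg1 (fun t : X × X' => p1 t.1 * p2 t.2) = p1 := by
  funext x
  unfold marg1
  show ∑ x', p1 x * p2 x' = p1 x
  rw [← Finset.mul_sum, h2.2, mul_one]

lemma marg2_prodDist {p1 : X → ℝ} {p2 : X' → ℝ} (h1 : IsDist p1) :
    marg2 (fun t : X × X' => p1 t.1 * p2 t.2) = p2 := by
  funext x'
  unfold marg2
  show ∑ x, p1 x * p2 x' = p2 x'
  rw [← Finset.sum_mul, h1.2, one_mul]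

lemma outDist_prodDist {p1 : X → ℝ} {p2 : X' → ℝ} (u : Y × Y') :
    outDist (fun t : X × X' => p1 t.1 * p2 t.2) (prodCh W W') u
      = outDist p1 W u.1 * outDist p2 W' u.2 := by
  unfold outDist
  rw [Fintype.sum_prod_type, Finset.sum_mul]
  refine Finset.sum_congr rfl fun x _ => ?_
  rw [Finset.mul_sum]
  refine Finset.sum_congr rfl fun x' _ => ?_
  show p1 x * p2 x' * (W x u.1 * W' x' u.2) = p1 x * W x u.1 * (p2 x' * W' x' u.2)
  ring

lemma prodDiv_prodDist {p1 : X → ℝ} {p2 : X' → ℝ} (h1 : IsDist p1) (h2 : IsDist p2) :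
    prodDiv (fun t : X × X' => p1 t.1 * p2 t.2) W W' = 0 := by
  unfold prodDiv
  rw [marg1_prodDist h2, marg2_prodDist h1]
  apply Finset.sum_eq_zero
  intro u _
  rw [outDist_prodDist]
  rcases eq_or_ne (outDist p1 W u.1 * outDist p2 W' u.2) 0 with h | h
  · rw [h, zero_mul]
  · rw [div_self h, Real.log_one, mul_zero]

lemma mutInfo_prodDist {p1 : X → ℝ} {p2 : X' → ℝ} (h1 : IsDist p1) (h2 : IsDist p2)
    (hW : IsChannel W) (hW' : IsChannel W') :
    mutInfo (fun t : X × X' => p1 t.1 * p2 t.2) (prodCh W W')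
      = mutInfo p1 W + mutInfo p2 W' := by
  rw [mutInfo_prod_eq (prodDist_isDist h1 h2) hW hW', prodDiv_prodDist h1 h2,
    marg1_prodDist h2, marg2_prodDist h1, sub_zero]

lemma Ccap_prod [Nonempty X] [Nonempty X'] (hW : IsChannel W) (hW' : IsChannel W') :
    Ccap (prodCh W W') = Ccap W + Ccap W' := by
  obtain ⟨P1, hP1, hC1, hmax1⟩ := Ccap_spec W hW
  obtain ⟨P2, hP2, hC2, hmax2⟩ := Ccap_spec W' hW'
  obtain ⟨Pm, hPm, hCm, hmaxm⟩ := Ccap_spec (prodCh W W') (prodCh_isChannel hW hW')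
  apply le_antisymm
  · rw [← hCm, mutInfo_prod_eq hPm hW hW']
    have h1 := hmax1 _ (marg1_isDist hPm)
    have h2 := hmax2 _ (marg2_isDist hPm)
    have h3 := prodDiv_nonneg hPm hW hW'
    linarith
  · have := hmaxm _ (prodDist_isDist hP1 hP2)
    rw [mutInfo_prodDist hP1 hP2 hW hW', hC1, hC2] at this
    exact this

/-- Equality case: a capacity-achieving input for the product channel has
capacity-achieving marginals and product output distribution. -/
lemma prod_achieving {P : X × X' → ℝ} [Nonempty X] [Nonempty X']
    (hP : IsDist P) (hW : IsChannel W) (hW' : IsChannel W')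
    (hC : mutInfo P (prodCh W W') = Ccap W + Ccap W') :
    mutInfo (marg1 P) W = Ccap W ∧ mutInfo (marg2 P) W' = Ccap W' ∧
      ∀ u : Y × Y', outDist P (prodCh W W') u
        = outDist (marg1 P) W u.1 * outDist (marg2 P) W' u.2 := by
  obtain ⟨P1, hP1, hC1, hmax1⟩ := Ccap_spec W hW
  obtain ⟨P2, hP2, hC2, hmax2⟩ := Ccap_spec W' hW'
  have h1 := hmax1 _ (marg1_isDist hP)
  have h2 := hmax2 _ (marg2_isDist hP)
  have h3 := prodDiv_nonneg hP hW hW'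
  have h4 := mutInfo_prod_eq hP hW hW'
  have e1 : mutInfo (marg1 P) W = Ccap W := by linarith
  have e2 : mutInfo (marg2 P) W' = Ccap W' := by linarith
  have e3 : prodDiv P W W' = 0 := by linarith
  exact ⟨e1, e2, prodDiv_eq_zero hP hW hW' e3⟩

end VAux5

section VAux6
open Real

lemma sum_mul_prod_add {Y Y' : Type} [Fintype Y] [Fintype Y'] (w : Y → ℝ) (w' : Y' → ℝ)
    (a : Y → ℝ) (b : Y' → ℝ) (hw : ∑ y, w y = 1) (hw' : ∑ y', w' y' = 1) :
    ∑ y, ∑ y', w y * w' y' * (a y + b y')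
      = ∑ y, w y * a y + ∑ y', w' y' * b y' := by
  have step : ∀ y, ∑ y', w y * w' y' * (a y + b y')
      = w y * a y + w y * ∑ y', w' y' * b y' := by
    intro y
    calc ∑ y', w y * w' y' * (a y + b y')
        = ∑ y', ((w y * a y) * w' y' + w y * (w' y' * b y')) :=
          Finset.sum_congr rfl fun y' _ => by ring
      _ = w y * a y + w y * ∑ y', w' y' * b y' := by
          rw [Finset.sum_add_distrib, ← Finset.mul_sum, ← Finset.mul_sum, hw', mul_one]
  calc ∑ y, ∑ y', w y * w' y' * (a y + b y')
      = ∑ y, (w y * a y + w y * ∑ y', w' y' * b y') := Finset.sum_congr rfl fun y _ => step y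
    _ = ∑ y, w y * a y + (∑ y, w y) * ∑ y', w' y' * b y' := by
        rw [Finset.sum_add_distrib, ← Finset.sum_mul]
    _ = ∑ y, w y * a y + ∑ y', w' y' * b y' := by rw [hw, one_mul]

lemma sum_mul_prod_sq {Y Y' : Type} [Fintype Y] [Fintype Y'] (w : Y → ℝ) (w' : Y' → ℝ)
    (a : Y → ℝ) (b : Y' → ℝ) (hw : ∑ y, w y = 1) (hw' : ∑ y', w' y' = 1)
    (ha : ∑ y, w y * a y = 0) :
    ∑ y, ∑ y', w y * w' y' * (a y + b y') ^ 2
      = ∑ y, w y * a y ^ 2 + ∑ y', w' y' * b y' ^ 2 := by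
  have step : ∀ y, ∑ y', w y * w' y' * (a y + b y') ^ 2
      = w y * a y ^ 2 + (w y * a y) * (2 * ∑ y', w' y' * b y')
        + w y * ∑ y', w' y' * b y' ^ 2 := by
    intro y
    calc ∑ y', w y * w' y' * (a y + b y') ^ 2
        = ∑ y', ((w y * a y ^ 2) * w' y' + (w y * a y) * (2 * (w' y' * b y'))
            + w y * (w' y' * b y' ^ 2)) :=
          Finset.sum_congr rfl fun y' _ => by ring
      _ = _ := by
          rw [Finset.sum_add_distrib, Finset.sum_add_distrib, ← Finset.mul_sum, ← Finset.mul_sum,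
            ← Finset.mul_sum, ← Finset.mul_sum, hw', mul_one]
  calc ∑ y, ∑ y', w y * w' y' * (a y + b y') ^ 2
      = ∑ y, (w y * a y ^ 2 + (w y * a y) * (2 * ∑ y', w' y' * b y')
          + w y * ∑ y', w' y' * b y' ^ 2) := Finset.sum_congr rfl fun y _ => step y
    _ = ∑ y, w y * a y ^ 2 + (∑ y, w y * a y) * (2 * ∑ y', w' y' * b y')
          + (∑ y, w y) * ∑ y', w' y' * b y' ^ 2 := by
        rw [Finset.sum_add_distrib, Finset.sum_add_distrib, ← Finset.sum_mul, ← Finset.sum_mul]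
    _ = ∑ y, w y * a y ^ 2 + ∑ y', w' y' * b y' ^ 2 := by
        rw [ha, hw, zero_mul, add_zero, one_mul]

variable {X Y X' Y' : Type} [Fintype X] [Fintype Y] [Fintype X'] [Fintype Y']
variable {W : X → Y → ℝ} {W' : X' → Y' → ℝ}

lemma wprod_pos_facts {P : X × X' → ℝ} (hP : IsDist P) (hW : IsChannel W) (hW' : IsChannel W')
    {t : X × X'} (ht : 0 < P t) {u : Y × Y'} (hu : 0 < prodCh W W' t u) :
    0 < W t.1 u.1 ∧ 0 < W' t.2 u.2 ∧
      0 < outDist (marg1 P) W u.1 ∧ 0 < outDist (marg2 P) W' u.2 := by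
  have hc : 0 < P t * prodCh W W' t u := mul_pos ht hu
  obtain ⟨_, h1, h2, _, h3, h4⟩ := prod_pos_facts hP hW hW' hc
  exact ⟨h1, h2, h3, h4⟩

lemma relEnt_prod {P : X × X' → ℝ} (hP : IsDist P) (hW : IsChannel W) (hW' : IsChannel W')
    (hQ : ∀ u : Y × Y', outDist P (prodCh W W') u
      = outDist (marg1 P) W u.1 * outDist (marg2 P) W' u.2)
    {t : X × X'} (ht : 0 < P t) :
    relEnt (prodCh W W') P t = relEnt W (marg1 P) t.1 + relEnt W' (marg2 P) t.2 := by
  unfold relEnt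
  calc ∑ u : Y × Y', prodCh W W' t u * Real.log (prodCh W W' t u / outDist P (prodCh W W') u)
      = ∑ u : Y × Y', prodCh W W' t u *
          (Real.log (W t.1 u.1 / outDist (marg1 P) W u.1)
            + Real.log (W' t.2 u.2 / outDist (marg2 P) W' u.2)) := by
        refine Finset.sum_congr rfl fun u _ => ?_
        rcases eq_or_lt_of_le ((prodCh_isChannel hW hW' t).1 u) with h | h
        · rw [← h, zero_mul, zero_mul]
        · obtain ⟨h1, h2, h3, h4⟩ := wprod_pos_facts hP hW hW' ht h
          rw [hQ u]
          congr 1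
          show Real.log ((W t.1 u.1 * W' t.2 u.2) / _) = _
          rw [Real.log_div (by positivity) (by positivity),
            Real.log_mul (ne_of_gt h1) (ne_of_gt h2),
            Real.log_mul (ne_of_gt h3) (ne_of_gt h4),
            Real.log_div (ne_of_gt h1) (ne_of_gt h3),
            Real.log_div (ne_of_gt h2) (ne_of_gt h4)]
          ring
    _ = relEnt W (marg1 P) t.1 + relEnt W' (marg2 P) t.2 := by
        rw [Fintype.sum_prod_type]
        simp only [prodCh]
        exact sum_mul_prod_add (W t.1) (W' t.2)
          (fun y => Real.log (W t.1 y / outDist (marg1 P) W y))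
          (fun y' => Real.log (W' t.2 y' / outDist (marg2 P) W' y'))
          (hW t.1).2 (hW' t.2).2

lemma varInner_prod {P : X × X' → ℝ} (hP : IsDist P) (hW : IsChannel W) (hW' : IsChannel W')
    (hQ : ∀ u : Y × Y', outDist P (prodCh W W') u
      = outDist (marg1 P) W u.1 * outDist (marg2 P) W' u.2)
    {t : X × X'} (ht : 0 < P t) :
    ∑ u : Y × Y', prodCh W W' t u *
        (Real.log (prodCh W W' t u / outDist P (prodCh W W') u) - relEnt (prodCh W W') P t) ^ 2
      = (∑ y, W t.1 y * (Real.log (W t.1 y / outDist (marg1 P) W y) - relEnt W (marg1 P) t.1) ^ 2)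
        + ∑ y', W' t.2 y' *
            (Real.log (W' t.2 y' / outDist (marg2 P) W' y') - relEnt W' (marg2 P) t.2) ^ 2 := by
  have hd : ∑ y, W t.1 y * (Real.log (W t.1 y / outDist (marg1 P) W y) - relEnt W (marg1 P) t.1)
      = 0 := by
    have : ∑ y, W t.1 y * (Real.log (W t.1 y / outDist (marg1 P) W y) - relEnt W (marg1 P) t.1)
        = (∑ y, W t.1 y * Real.log (W t.1 y / outDist (marg1 P) W y))
          - relEnt W (marg1 P) t.1 * ∑ y, W t.1 y := by
      rw [Finset.mul_sum, ← Finset.sum_sub_distrib]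
      exact Finset.sum_congr rfl fun y _ => by ring
    rw [this, (hW t.1).2, mul_one]
    show relEnt W (marg1 P) t.1 - relEnt W (marg1 P) t.1 = 0
    ring
  calc ∑ u : Y × Y', prodCh W W' t u *
        (Real.log (prodCh W W' t u / outDist P (prodCh W W') u) - relEnt (prodCh W W') P t) ^ 2
      = ∑ u : Y × Y', prodCh W W' t u *
          ((Real.log (W t.1 u.1 / outDist (marg1 P) W u.1) - relEnt W (marg1 P) t.1)
            + (Real.log (W' t.2 u.2 / outDist (marg2 P) W' u.2) - relEnt W' (marg2 P) t.2)) ^ 2 := by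
        refine Finset.sum_congr rfl fun u _ => ?_
        rcases eq_or_lt_of_le ((prodCh_isChannel hW hW' t).1 u) with h | h
        · rw [← h, zero_mul, zero_mul]
        · obtain ⟨h1, h2, h3, h4⟩ := wprod_pos_facts hP hW hW' ht h
          rw [hQ u, relEnt_prod hP hW hW' hQ ht]
          congr 2
          show Real.log ((W t.1 u.1 * W' t.2 u.2) / _) - _ = _
          rw [Real.log_div (by positivity) (by positivity),
            Real.log_mul (ne_of_gt h1) (ne_of_gt h2),
            Real.log_mul (ne_of_gt h3) (ne_of_gt h4),
            Real.log_div (ne_of_gt h1) (ne_of_gt h3),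
            Real.log_div (ne_of_gt h2) (ne_of_gt h4)]
          ring
    _ = _ := by
        rw [Fintype.sum_prod_type]
        simp only [prodCh]
        exact sum_mul_prod_sq (W t.1) (W' t.2)
          (fun y => Real.log (W t.1 y / outDist (marg1 P) W y) - relEnt W (marg1 P) t.1)
          (fun y' => Real.log (W' t.2 y' / outDist (marg2 P) W' y') - relEnt W' (marg2 P) t.2)
          (hW t.1).2 (hW' t.2).2 hd

/-- The variance decomposition for a product channel with product output distribution. -/
lemma varInfo_prod {P : X × X' → ℝ} (hP : IsDist P) (hW : IsChannel W) (hW' : IsChannel W')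
    (hQ : ∀ u : Y × Y', outDist P (prodCh W W') u
      = outDist (marg1 P) W u.1 * outDist (marg2 P) W' u.2) :
    varInfo P (prodCh W W') = varInfo (marg1 P) W + varInfo (marg2 P) W' := by
  set v1 : X → ℝ := fun x =>
    ∑ y, W x y * (Real.log (W x y / outDist (marg1 P) W y) - relEnt W (marg1 P) x) ^ 2 with hv1
  set v2 : X' → ℝ := fun x' =>
    ∑ y', W' x' y' * (Real.log (W' x' y' / outDist (marg2 P) W' y') - relEnt W' (marg2 P) x') ^ 2
    with hv2
  have h1 : varInfo P (prodCh W W') = ∑ t : X × X', P t * (v1 t.1 + v2 t.2) := by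
    unfold varInfo
    refine Finset.sum_congr rfl fun t _ => ?_
    rcases eq_or_lt_of_le (hP.1 t) with h | h
    · rw [← h, zero_mul, zero_mul]
    · rw [varInner_prod hP hW hW' hQ h]
  rw [h1]
  have h2 : ∑ t : X × X', P t * (v1 t.1 + v2 t.2)
      = (∑ t : X × X', P t * v1 t.1) + ∑ t : X × X', P t * v2 t.2 := by
    rw [← Finset.sum_add_distrib]
    exact Finset.sum_congr rfl fun t _ => by ring
  rw [h2]
  have h3 : ∑ t : X × X', P t * v1 t.1 = ∑ x, marg1 P x * v1 x := by
    rw [Fintype.sum_prod_type]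
    refine Finset.sum_congr rfl fun x _ => ?_
    have e : ∀ x' : X', P (x, x') * v1 (x, x').1 = P (x, x') * v1 x := fun _ => rfl
    rw [Finset.sum_congr rfl fun x' _ => e x', ← Finset.sum_mul]
    rfl
  have h4 : ∑ t : X × X', P t * v2 t.2 = ∑ x', marg2 P x' * v2 x' := by
    rw [Fintype.sum_prod_type_right]
    refine Finset.sum_congr rfl fun x' _ => ?_
    have e : ∀ x : X, P (x, x') * v2 (x, x').2 = P (x, x') * v2 x' := fun _ => rfl
    rw [Finset.sum_congr rfl fun x _ => e x, ← Finset.sum_mul]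
    rfl
  rw [h3, h4]
  rfl

lemma varInfo_nonneg {P : X → ℝ} {W : X → Y → ℝ} (hP : IsDist P) (hW : IsChannel W) :
    0 ≤ varInfo P W := by
  apply Finset.sum_nonneg
  intro x _
  apply mul_nonneg (hP.1 x)
  apply Finset.sum_nonneg
  intro y _
  exact mul_nonneg ((hW x).1 y) (sq_nonneg _)

lemma varInfo_le {P : X → ℝ} {W : X → Y → ℝ} (hP : IsDist P) (hW : IsChannel W) :
    varInfo P W ≤ (Fintype.card X : ℝ) * (Fintype.card Y : ℝ) := by
  have key : ∀ x, P x * ∑ y, W x y * (Real.log (W x y / outDist P W y) - relEnt W P x) ^ 2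
      ≤ ∑ y, P x * W x y * Real.log (W x y / outDist P W y) ^ 2 := by
    intro x
    rcases eq_or_lt_of_le (hP.1 x) with h | h
    · rw [← h, zero_mul]
      apply Finset.sum_nonneg
      intro y _
      simp
    · have hexp : ∑ y, W x y * (Real.log (W x y / outDist P W y) - relEnt W P x) ^ 2
          = (∑ y, W x y * Real.log (W x y / outDist P W y) ^ 2) - relEnt W P x ^ 2 := by
        have e1 : ∑ y, W x y * (Real.log (W x y / outDist P W y) - relEnt W P x) ^ 2
            = (∑ y, W x y * Real.log (W x y / outDist P W y) ^ 2)
              - 2 * relEnt W P x * ∑ y, W x y * Real.log (W x y / outDist P W y)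
              + relEnt W P x ^ 2 * ∑ y, W x y := by
          rw [Finset.mul_sum, Finset.mul_sum, ← Finset.sum_sub_distrib, ← Finset.sum_add_distrib]
          exact Finset.sum_congr rfl fun y _ => by ring
        rw [e1, (hW x).2, mul_one]
        show _ - 2 * relEnt W P x * relEnt W P x + _ = _
        ring
      rw [hexp, mul_sub]
      have : ∑ y, P x * W x y * Real.log (W x y / outDist P W y) ^ 2
          = P x * ∑ y, W x y * Real.log (W x y / outDist P W y) ^ 2 := by
        rw [Finset.mul_sum]
        exact Finset.sum_congr rfl fun y _ => by ring
      rw [this]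
      nlinarith [sq_nonneg (relEnt W P x), le_of_lt h]
  calc varInfo P W ≤ ∑ x, ∑ y, P x * W x y * Real.log (W x y / outDist P W y) ^ 2 :=
        Finset.sum_le_sum fun x _ => key x
    _ ≤ ∑ x : X, ∑ y : Y, (1 : ℝ) := by
        refine Finset.sum_le_sum fun x _ => Finset.sum_le_sum fun y _ => ?_
        rcases eq_or_lt_of_le (mul_nonneg (hP.1 x) ((hW x).1 y)) with hc | hc
        · rw [← hc, zero_mul]; norm_num
        · have hPx : 0 < P x := by
            rcases eq_or_lt_of_le (hP.1 x) with h | h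
            · exfalso; rw [← h, zero_mul] at hc; exact lt_irrefl _ hc
            · exact h
          have hWxy : 0 < W x y := by
            rcases eq_or_lt_of_le ((hW x).1 y) with h | h
            · exfalso; rw [← h, mul_zero] at hc; exact lt_irrefl _ hc
            · exact h
          have hQ : 0 < outDist P W y := lt_of_lt_of_le hc (le_outDist hP hW x y)
          have hc1 : P x * W x y ≤ 1 := by
            calc P x * W x y ≤ outDist P W y := le_outDist hP hW x y
              _ ≤ 1 := outDist_le_one hP hW y
          have hW1 : W x y ≤ 1 := isDist_le_one (hW x) y
          have hQ1 : outDist P W y ≤ 1 := outDist_le_one hP hW y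
          have hcW : P x * W x y ≤ W x y := by nlinarith [isDist_le_one hP x]
          have hcQ : P x * W x y ≤ outDist P W y := le_outDist hP hW x y
          have hlog : Real.log (W x y / outDist P W y)
              = Real.log (W x y) - Real.log (outDist P W y) :=
            Real.log_div (ne_of_gt hWxy) (ne_of_gt hQ)
          have hb1 : Real.log (P x * W x y) ≤ Real.log (W x y) := Real.log_le_log hc hcW
          have hb2 : Real.log (W x y) ≤ 0 := Real.log_nonpos (le_of_lt hWxy) hW1
          have hb3 : Real.log (P x * W x y) ≤ Real.log (outDist P W y) := Real.log_le_log hc hcQ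
          have hb4 : Real.log (outDist P W y) ≤ 0 := Real.log_nonpos (le_of_lt hQ) hQ1
          have hsq : Real.log (W x y / outDist P W y) ^ 2 ≤ Real.log (P x * W x y) ^ 2 := by
            rw [hlog]
            have h5 : Real.log (P x * W x y) ^ 2 = (-Real.log (P x * W x y)) ^ 2 := by ring
            rw [h5]
            apply sq_le_sq'
            · linarith
            · linarith
          calc P x * W x y * Real.log (W x y / outDist P W y) ^ 2
              ≤ P x * W x y * Real.log (P x * W x y) ^ 2 :=
                mul_le_mul_of_nonneg_left hsq (le_of_lt hc)
            _ ≤ 1 := mul_log_sq_le_one hc hc1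
    _ = (Fintype.card X : ℝ) * (Fintype.card Y : ℝ) := by
        simp [Finset.sum_const, Finset.card_univ]

end VAux6

section VAux7

lemma sSup_setsum {A B : Set ℝ} (hA : A.Nonempty) (hB : B.Nonempty)
    (hA' : BddAbove A) (hB' : BddAbove B) :
    sSup {x | ∃ a ∈ A, ∃ b ∈ B, x = a + b} = sSup A + sSup B := by
  have hbdd : BddAbove {x | ∃ a ∈ A, ∃ b ∈ B, x = a + b} := by
    obtain ⟨u, hu⟩ := hA'; obtain ⟨v, hv⟩ := hB'
    exact ⟨u + v, by rintro x ⟨a, ha, b, hb, rfl⟩; exact add_le_add (hu ha) (hv hb)⟩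
  apply le_antisymm
  · apply csSup_le
    · obtain ⟨a, ha⟩ := hA; obtain ⟨b, hb⟩ := hB
      exact ⟨a + b, a, ha, b, hb, rfl⟩
    · rintro x ⟨a, ha, b, hb, rfl⟩
      exact add_le_add (le_csSup hA' ha) (le_csSup hB' hb)
  · have h2 : sSup A ≤ sSup {x | ∃ a ∈ A, ∃ b ∈ B, x = a + b} - sSup B := by
      apply csSup_le hA
      intro a ha
      have h3 : sSup B ≤ sSup {x | ∃ a ∈ A, ∃ b ∈ B, x = a + b} - a := by
        apply csSup_le hB
        intro b hb
        have := le_csSup hbdd (show a + b ∈ {x | ∃ a ∈ A, ∃ b ∈ B, x = a + b}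
          from ⟨a, ha, b, hb, rfl⟩)
        linarith
      linarith
    linarith

lemma sInf_setsum {A B : Set ℝ} (hA : A.Nonempty) (hB : B.Nonempty)
    (hA' : BddBelow A) (hB' : BddBelow B) :
    sInf {x | ∃ a ∈ A, ∃ b ∈ B, x = a + b} = sInf A + sInf B := by
  have hbdd : BddBelow {x | ∃ a ∈ A, ∃ b ∈ B, x = a + b} := by
    obtain ⟨u, hu⟩ := hA'; obtain ⟨v, hv⟩ := hB'
    exact ⟨u + v, by rintro x ⟨a, ha, b, hb, rfl⟩; exact add_le_add (hu ha) (hv hb)⟩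
  apply le_antisymm
  · have h2 : sInf {x | ∃ a ∈ A, ∃ b ∈ B, x = a + b} - sInf B ≤ sInf A := by
      apply le_csInf hA
      intro a ha
      have h3 : sInf {x | ∃ a ∈ A, ∃ b ∈ B, x = a + b} - a ≤ sInf B := by
        apply le_csInf hB
        intro b hb
        have := csInf_le hbdd (show a + b ∈ {x | ∃ a ∈ A, ∃ b ∈ B, x = a + b}
          from ⟨a, ha, b, hb, rfl⟩)
        linarith
      linarith
    linarith
  · apply le_csInf
    · obtain ⟨a, ha⟩ := hA; obtain ⟨b, hb⟩ := hB
      exact ⟨a + b, a, ha, b, hb, rfl⟩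
    · rintro x ⟨a, ha, b, hb, rfl⟩
      exact add_le_add (csInf_le hA' ha) (csInf_le hB' hb)

end VAux7

theorem Vplus_Vminus_additive'
    {X Y X' Y' : Type} [Fintype X] [Fintype Y] [Fintype X'] [Fintype Y']
    [Nonempty X] [Nonempty Y] [Nonempty X'] [Nonempty Y']
    (W : X → Y → ℝ) (W' : X' → Y' → ℝ)
    (hW : IsChannel W) (hW' : IsChannel W') :
    Vplus (prodCh W W') = Vplus W + Vplus W' ∧
    Vminus (prodCh W W') = Vminus W + Vminus W' := by
  classical
  have hCprod := Ccap_prod hW hW'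
  have hEq : {v | ∃ P : X × X' → ℝ, IsDist P ∧ mutInfo P (prodCh W W') = Ccap (prodCh W W')
        ∧ v = varInfo P (prodCh W W')}
      = {x | ∃ a ∈ {v | ∃ P : X → ℝ, IsDist P ∧ mutInfo P W = Ccap W ∧ v = varInfo P W},
          ∃ b ∈ {v | ∃ P : X' → ℝ, IsDist P ∧ mutInfo P W' = Ccap W' ∧ v = varInfo P W'},
          x = a + b} := by
    ext v
    constructor
    · rintro ⟨P, hP, hC, rfl⟩
      rw [hCprod] at hC
      obtain ⟨e1, e2, hQ⟩ := prod_achieving hP hW hW' hC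
      exact ⟨varInfo (marg1 P) W, ⟨marg1 P, marg1_isDist hP, e1, rfl⟩,
        varInfo (marg2 P) W', ⟨marg2 P, marg2_isDist hP, e2, rfl⟩,
        varInfo_prod hP hW hW' hQ⟩
    · rintro ⟨a, ⟨P1, hP1, hC1, rfl⟩, b, ⟨P2, hP2, hC2, rfl⟩, rfl⟩
      refine ⟨fun t => P1 t.1 * P2 t.2, prodDist_isDist hP1 hP2, ?_, ?_⟩
      · rw [mutInfo_prodDist hP1 hP2 hW hW', hC1, hC2, hCprod]
      · have hQ : ∀ u : Y × Y', outDist (fun t : X × X' => P1 t.1 * P2 t.2) (prodCh W W') u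
            = outDist (marg1 (fun t : X × X' => P1 t.1 * P2 t.2)) W u.1
              * outDist (marg2 (fun t : X × X' => P1 t.1 * P2 t.2)) W' u.2 := by
          intro u
          rw [marg1_prodDist hP2, marg2_prodDist hP1, outDist_prodDist]
        rw [varInfo_prod (prodDist_isDist hP1 hP2) hW hW' hQ,
          marg1_prodDist hP2, marg2_prodDist hP1]
  obtain ⟨P01, hP01, hC01, _⟩ := Ccap_spec W hW
  obtain ⟨P02, hP02, hC02, _⟩ := Ccap_spec W' hW'
  have hne1 : {v | ∃ P : X → ℝ, IsDist P ∧ mutInfo P W = Ccap W ∧ v = varInfo P W}.Nonempty :=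
    ⟨varInfo P01 W, P01, hP01, hC01, rfl⟩
  have hne2 : {v | ∃ P : X' → ℝ, IsDist P ∧ mutInfo P W' = Ccap W' ∧ v = varInfo P W'}.Nonempty :=
    ⟨varInfo P02 W', P02, hP02, hC02, rfl⟩
  have hba1 : BddAbove {v | ∃ P : X → ℝ, IsDist P ∧ mutInfo P W = Ccap W ∧ v = varInfo P W} :=
    ⟨(Fintype.card X : ℝ) * (Fintype.card Y : ℝ), by
      rintro v ⟨P, hP, _, rfl⟩; exact varInfo_le hP hW⟩
  have hba2 : BddAbove {v | ∃ P : X' → ℝ, IsDist P ∧ mutInfo P W' = Ccap W' ∧ v = varInfo P W'} :=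
    ⟨(Fintype.card X' : ℝ) * (Fintype.card Y' : ℝ), by
      rintro v ⟨P, hP, _, rfl⟩; exact varInfo_le hP hW'⟩
  have hbb1 : BddBelow {v | ∃ P : X → ℝ, IsDist P ∧ mutInfo P W = Ccap W ∧ v = varInfo P W} :=
    ⟨0, by rintro v ⟨P, hP, _, rfl⟩; exact varInfo_nonneg hP hW⟩
  have hbb2 : BddBelow {v | ∃ P : X' → ℝ, IsDist P ∧ mutInfo P W' = Ccap W' ∧ v = varInfo P W'} :=
    ⟨0, by rintro v ⟨P, hP, _, rfl⟩; exact varInfo_nonneg hP hW'⟩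
  constructor
  · show sSup _ = sSup _ + sSup _
    rw [hEq]
    exact sSup_setsum hne1 hne2 hba1 hba2
  · show sInf _ = sInf _ + sInf _
    rw [hEq]
    exact sInf_setsum hne1 hne2 hbb1 hbb2

/-- Lemma 2: additivity of `V_W^+` and `V_W^-` under products of channels. -/
theorem Vplus_Vminus_additive
    {X Y X' Y' : Type} [Fintype X] [Fintype Y] [Fintype X'] [Fintype Y']
    [Nonempty X] [Nonempty Y] [Nonempty X'] [Nonempty Y']
    (W : X → Y → ℝ) (W' : X' → Y' → ℝ)
    (hW : IsChannel W) (hW' : IsChannel W') :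
    Vplus (prodCh W W') = Vplus W + Vplus W' ∧
    Vminus (prodCh W W') = Vminus W + Vminus W' :=
  Vplus_Vminus_additive' W W' hW hW'
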